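/- A ring R is left coherent (every finitely generated left ideal is finitely presented) if and only if the direct product of any family of flat right R-modules is a flat right R-module. -/

import Mathlib

open TensorProduct LinearMap

section Aux

variable {R : Type} [CommRing R] {ι : Type}

/-- The standard isomorphism `(Fin k → R) ⊗ P ≃ (Fin k → P)`. -/
noncomputable def finFreeTensorEquiv (k : ℕ) (P : Type) [AddCommGroup P] [Module R P] :
    ((Fin k → R) ⊗[R] P) ≃ₗ[R] (Fin k → P) :=
  (TensorProduct.comm R (Fin k → R) P).trans (TensorProduct.piScalarRight R R P (Fin k))

@[simp] lemma finFreeTensorEquiv_tmul (k : ℕ) (P : Type) [AddCommGroup P] [Module R P]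
    (v : Fin k → R) (m : P) :
    finFreeTensorEquiv k P (v ⊗ₜ m) = fun j => v j • m := by
  simp [finFreeTensorEquiv]

lemma piRightHom_natural {A B : Type} [AddCommGroup A] [Module R A] [AddCommGroup B] [Module R B]
    (p : A →ₗ[R] B) (M : ι → Type) [∀ i, AddCommGroup (M i)] [∀ i, Module R (M i)]
    (x : A ⊗[R] (∀ i, M i)) :
    piRightHom R R B M (rTensor (∀ i, M i) p x)
      = fun i => rTensor (M i) p (piRightHom R R A M x i) := by
  induction x using TensorProduct.induction_on with
  | zero => funext i; simp
  | tmul a m => simp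
  | add x y hx hy =>
    simp only [map_add] at *
    funext i
    simp [hx, hy, Pi.add_apply]

set_option synthInstance.maxHeartbeats 400000 in
lemma finFreeTensorEquiv_piRightHom (k : ℕ) (M : ι → Type)
    [∀ i, AddCommGroup (M i)] [∀ i, Module R (M i)]
    (x : (Fin k → R) ⊗[R] (∀ i, M i)) (i : ι) (j : Fin k) :
    finFreeTensorEquiv k (M i) (piRightHom R R (Fin k → R) M x i) j
      = finFreeTensorEquiv k (∀ i, M i) x j i := by
  induction x using TensorProduct.induction_on with
  | zero => simp only [map_zero, Pi.zero_apply, map_zero]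
  | tmul v m => simp
  | add x y hx hy => simp only [map_add, Pi.add_apply] at *; simp [hx, hy]

lemma piRightHom_bijective_finFree (k : ℕ) (M : ι → Type)
    [∀ i, AddCommGroup (M i)] [∀ i, Module R (M i)] :
    Function.Bijective (piRightHom R R (Fin k → R) M) := by
  constructor
  · intro x y h
    apply (finFreeTensorEquiv k (∀ i, M i)).injective
    funext j; funext i
    rw [← finFreeTensorEquiv_piRightHom, ← finFreeTensorEquiv_piRightHom, h]
  · intro c
    refine ⟨(finFreeTensorEquiv k (∀ i, M i)).symm
      (fun j i => finFreeTensorEquiv k (M i) (c i) j), ?_⟩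
    funext i
    apply (finFreeTensorEquiv k (M i)).injective
    funext j
    rw [finFreeTensorEquiv_piRightHom]
    simp

lemma piRightHom_injective_of_fp (N : Type) [AddCommGroup N] [Module R N]
    [hN : Module.FinitePresentation R N] (M : ι → Type)
    [∀ i, AddCommGroup (M i)] [∀ i, Module R (M i)] :
    Function.Injective (piRightHom R R N M) := by
  classical
  obtain ⟨k, p, hp⟩ := Module.Finite.exists_fin' R N
  have hker : (LinearMap.ker p).FG := Module.FinitePresentation.fg_ker p hp
  obtain ⟨l, b, hb⟩ := Submodule.fg_iff_exists_fin_generating_family.mp hker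
  set q : (Fin l → R) →ₗ[R] (Fin k → R) :=
    Fintype.linearCombination R (fun j => (b j : Fin k → R)) with hq
  have hrq : LinearMap.range q = LinearMap.ker p := by
    rw [hq, Fintype.range_linearCombination, hb]
  have hexact : Function.Exact q p := LinearMap.exact_iff.mpr hrq.symm
  have key : ∀ x : N ⊗[R] (∀ i, M i), piRightHom R R N M x = 0 → x = 0 := by
    intro x hx
    obtain ⟨y, rfl⟩ := LinearMap.rTensor_surjective (∀ i, M i) hp x
    have h0 : (fun i => rTensor (M i) p (piRightHom R R (Fin k → R) M y i))
        = (0 : ∀ i, N ⊗[R] M i) := (piRightHom_natural p M y).symm.trans hx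
    have h1 : ∀ i, rTensor (M i) p (piRightHom R R (Fin k → R) M y i) = 0 :=
      fun i => congrFun h0 i
    have h2 : ∀ i, ∃ z : (Fin l → R) ⊗[R] M i,
        rTensor (M i) q z = piRightHom R R (Fin k → R) M y i := by
      intro i
      exact (rTensor_exact (M i) hexact hp (piRightHom R R (Fin k → R) M y i)).mp (h1 i)
    choose z hz using h2
    obtain ⟨w, hw⟩ := (piRightHom_bijective_finFree l M).2 z
    have hyw : y = rTensor (∀ i, M i) q w := by
      apply (piRightHom_bijective_finFree k M).1
      rw [piRightHom_natural q M w, hw]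
      funext i
      exact (hz i).symm
    rw [hyw, ← LinearMap.comp_apply, ← LinearMap.rTensor_comp]
    have hpq : p ∘ₗ q = 0 :=
      LinearMap.ext fun v => by simpa using hexact.apply_apply_eq_zero v
    rw [hpq, LinearMap.rTensor_zero, LinearMap.zero_apply]
  intro a b hab
  rw [← sub_eq_zero]
  exact key _ (by rw [map_sub, hab, sub_self])

end Aux

section Main

variable {R : Type} [CommRing R]

/-- Forward direction: if every f.g. ideal is f.p., products of flat modules are flat. -/
lemma flat_pi_of_coherent
    (hcoh : ∀ I : Ideal R, I.FG → Module.FinitePresentation R I)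
    (ι : Type) (F : ι → Type) [∀ i, AddCommGroup (F i)] [∀ i, Module R (F i)]
    (hF : ∀ i, Module.Flat R (F i)) : Module.Flat R (∀ i, F i) := by
  rw [Module.Flat.iff_rTensor_injective]
  intro I hI
  haveI : Module.FinitePresentation R I := hcoh I hI
  have hcomm : (piRightHom R R R F) ∘ (rTensor (∀ i, F i) I.subtype)
      = (fun v i => rTensor (F i) I.subtype (v i)) ∘ (piRightHom R R I F) :=
    funext fun x => piRightHom_natural I.subtype F x
  have houter : Function.Injective (fun v : ∀ i, (↥I) ⊗[R] F i =>
      fun i => rTensor (F i) I.subtype (v i)) := by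
    intro v w h
    funext i
    exact (Module.Flat.iff_rTensor_injective (R := R) (M := F i)).mp (hF i) hI (congrFun h i)
  have hinner : Function.Injective (piRightHom R R (↥I) F) :=
    piRightHom_injective_of_fp I F
  have : Function.Injective ((piRightHom R R R F) ∘ (rTensor (∀ i, F i) I.subtype)) := by
    rw [hcomm]
    exact houter.comp hinner
  exact this.of_comp

/-- Converse direction: if products of flat modules are flat, every f.g. ideal is f.p. -/
lemma fp_of_pi_flat
    (hprod : ∀ (ι : Type) (F : ι → Type) [∀ i, AddCommGroup (F i)] [∀ i, Module R (F i)],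
      (∀ i, Module.Flat R (F i)) → Module.Flat R (∀ i, F i))
    (I : Ideal R) (hIfg : I.FG) : Module.FinitePresentation R I := by
  classical
  obtain ⟨n, a, ha⟩ := Submodule.fg_iff_exists_fin_generating_family.mp hIfg
  set f : (Fin n → R) →ₗ[R] R := Fintype.linearCombination R a with hf
  have hrange : LinearMap.range f = I := by
    rw [hf, Fintype.range_linearCombination]; exact ha
  set K := LinearMap.ker f with hK
  haveI hM : Module.Flat R ((↥K) → R) :=
    hprod (↥K) (fun _ => R) (fun _ => Module.Flat.self (R := R))
  -- the canonical element
  set m : Fin n → ((↥K) → R) := fun i k => (k : Fin n → R) i with hm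
  set ξ : ((↥K) → R) ⊗[R] (Fin n → R) := ∑ i, m i ⊗ₜ[R] Pi.single i 1 with hξ
  have hexact : Function.Exact K.subtype f := by
    rw [LinearMap.exact_iff, Submodule.range_subtype]
  have h2 := Module.Flat.lTensor_exact ((↥K) → R) hexact
  have hξ0 : lTensor ((↥K) → R) f ξ = 0 := by
    rw [hξ, map_sum]
    have : ∀ i : Fin n, lTensor ((↥K) → R) f (m i ⊗ₜ[R] Pi.single i 1)
        = (a i • m i) ⊗ₜ[R] (1 : R) := by
      intro i
      rw [lTensor_tmul]
      rw [show f (Pi.single i 1) = a i by simp [hf]]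
      rw [show (m i ⊗ₜ[R] a i : _ ⊗[R] R) = (a i • m i) ⊗ₜ[R] (1:R) by
        rw [show (a i : R) = a i • (1:R) by simp, tmul_smul, smul_tmul']
        simp]
    rw [Finset.sum_congr rfl fun i _ => this i, ← TensorProduct.sum_tmul]
    have hzero : (∑ i, a i • m i) = 0 := by
      funext k
      have hk : f (k : Fin n → R) = 0 := k.2
      simp only [hf, Fintype.linearCombination_apply, smul_eq_mul] at hk
      simp only [Finset.sum_apply, Pi.smul_apply, hm, smul_eq_mul, Pi.zero_apply]
      rw [← hk]
      exact Finset.sum_congr rfl fun i _ => mul_comm _ _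
    rw [hzero, zero_tmul]
  obtain ⟨t, ht⟩ := (h2 ξ).mp hξ0
  obtain ⟨S, hS⟩ := TensorProduct.exists_finset t
  have hKfg : K.FG := by
    rw [Submodule.fg_def]
    refine ⟨(fun s : ((↥K) → R) × (↥K) => (s.2 : Fin n → R)) '' ↑S, (S.finite_toSet).image _, ?_⟩
    apply le_antisymm
    · rw [Submodule.span_le]
      rintro x ⟨s, _, rfl⟩
      exact s.2.2
    · intro k hk
      -- evaluate ξ at k
      set ev : ((↥K) → R) →ₗ[R] R := LinearMap.proj ⟨k, hk⟩ with hev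
      set φ : ((↥K) → R) ⊗[R] (Fin n → R) →ₗ[R] (Fin n → R) :=
        (TensorProduct.lid R (Fin n → R)).toLinearMap ∘ₗ rTensor (Fin n → R) ev with hφ
      have hφξ : φ ξ = k := by
        rw [hξ, map_sum]
        have : ∀ i : Fin n, φ (m i ⊗ₜ[R] Pi.single i 1) = Pi.single i (k i) := by
          intro i
          simp only [hφ, LinearMap.comp_apply, rTensor_tmul, LinearEquiv.coe_coe,
            TensorProduct.lid_tmul, hev, LinearMap.proj_apply, hm]
          rw [← Pi.single_smul]
          simp
        rw [Finset.sum_congr rfl fun i _ => this i]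
        exact Finset.univ_sum_single _
      have hφξ' : φ ξ ∈ Submodule.span R ((fun s : ((↥K) → R) × (↥K) =>
          (s.2 : Fin n → R)) '' ↑S) := by
        rw [← ht, hS, map_sum, map_sum]
        apply Submodule.sum_mem
        intro s hs
        have : φ (lTensor ((↥K) → R) K.subtype (s.1 ⊗ₜ[R] s.2))
            = s.1 ⟨k, hk⟩ • (s.2 : Fin n → R) := by
          simp [hφ, hev]
        rw [this]
        exact Submodule.smul_mem _ _ (Submodule.subset_span ⟨s, hs, rfl⟩)
      rwa [hφξ] at hφξ'
  -- conclude
  have hmem : ∀ v, f v ∈ I := fun v => by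
    have : f v ∈ LinearMap.range f := LinearMap.mem_range_self f v
    rwa [hrange] at this
  set p : (Fin n → R) →ₗ[R] I := f.codRestrict I hmem with hp
  have hpsurj : Function.Surjective p := by
    rintro ⟨y, hy⟩
    have : y ∈ LinearMap.range f := by rwa [hrange]
    obtain ⟨v, hv⟩ := this
    exact ⟨v, Subtype.ext hv⟩
  have hpker : LinearMap.ker p = K := LinearMap.ker_codRestrict _ _ _
  exact Module.finitePresentation_of_free_of_surjective p hpsurj (hpker ▸ hKfg)

end Main


/-- A ring is left coherent if every finitely generated (left) ideal is finitely
presented as a module. -/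
def IsLeftCoherentRing (R : Type) [Ring R] : Prop :=
  ∀ I : Ideal R, I.FG → Module.FinitePresentation R I

/-- A ring `R` is left coherent (every finitely generated left ideal is
finitely presented) if and only if the direct product of any family of flat `R`-modules
is flat. -/
theorem isLeftCoherentRing_iff_pi_flat (R : Type) [CommRing R] :
    IsLeftCoherentRing R ↔
      ∀ (ι : Type) (F : ι → Type) [∀ i, AddCommGroup (F i)] [∀ i, Module R (F i)],
        (∀ i, Module.Flat R (F i)) → Module.Flat R (∀ i, F i) := by
  constructor
  · intro hcoh ι F _ _ hF
    exact flat_pi_of_coherent hcoh ι F hF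
  · intro hprod I hI
    exact fp_of_pi_flat hprod I hI
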